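/- Let R be a reduced commutative ring whose total ring of quotients Q has Krull dimension 0. Then an ideal I of R is contained in a minimal prime ideal of R if and only if I is not regular (i.e. I contains no non-zero-divisor). -/

import Mathlib

universe u

open MulOpposite Function

lemma aux_minimal_prime_not_regular {R : Type*} [CommRing R] [IsReduced R]
    {p : Ideal R} (hp : p ∈ minimalPrimes R) {x : R} (hx : x ∈ p) :
    x ∉ nonZeroDivisors R := by
  intro hreg
  haveI hpp : p.IsPrime := hp.1.1
  have hnil : IsNilpotent (algebraMap R (Localization p.primeCompl) x) := by
    rw [@Ring.KrullDimLE.isNilpotent_iff_mem_maximalIdeal _ _ (.of_isLocalization p hp _)]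
    exact (IsLocalization.AtPrime.to_map_mem_maximal_iff _ p x).mpr hx
  obtain ⟨n, hn⟩ := hnil
  rw [← map_pow] at hn
  obtain ⟨m, hm⟩ := (IsLocalization.map_eq_zero_iff p.primeCompl _ _).mp hn
  have hm0 : (m : R) = 0 := (pow_mem hreg n).2 _ hm
  exact m.2 (hm0 ▸ p.zero_mem)

lemma aux_prime_eq_of_le_of_kdim_zero {Q : Type*} [CommRing Q] (hdim : ringKrullDim Q = 0)
    {q m : Ideal Q} (hq : q.IsPrime) (hm : m.IsPrime) (h : q ≤ m) : q = m := by
  by_contra hne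
  have hlt : (⟨q, hq⟩ : PrimeSpectrum Q) < ⟨m, hm⟩ :=
    lt_of_le_of_ne h (by simpa [PrimeSpectrum.ext_iff] using hne)
  have hle := Order.LTSeries.length_le_krullDim
    ((RelSeries.singleton _ (⟨q, hq⟩ : PrimeSpectrum Q)).snoc _ hlt)
  rw [show Order.krullDim (PrimeSpectrum Q) = ringKrullDim Q from rfl, hdim] at hle
  simp [RelSeries.snoc] at hle
  exact absurd hle (by simp [RelSeries.append])

/-- **Lemma 4.2.** Let `R` be a reduced commutative ring whose total ring of quotients
`Q` has Krull dimension `0`. An ideal `I` of `R` is contained in a minimal prime ideal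
of `R` if and only if `I` is not regular. -/
theorem le_minimal_prime_iff_not_regular (R : Type u) [CommRing R] [IsReduced R]
    (Q : Type u) [CommRing Q] [Algebra R Q] [IsFractionRing R Q]
    (hdim : ringKrullDim Q = 0) (I : Ideal R) :
    (∃ p ∈ minimalPrimes R, I ≤ p) ↔ ¬(∃ r ∈ I, r ∈ nonZeroDivisors R) := by
  constructor
  · rintro ⟨p, hp, hIp⟩ ⟨r, hrI, hreg⟩
    exact aux_minimal_prime_not_regular hp (hIp hrI) hreg
  · intro hnr
    have hmap : Ideal.map (algebraMap R Q) I ≠ ⊤ := by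
      intro htop
      have h1 : (1 : Q) ∈ Ideal.map (algebraMap R Q) I := htop ▸ Submodule.mem_top
      obtain ⟨⟨a, s⟩, h⟩ := (IsLocalization.mem_map_algebraMap_iff (nonZeroDivisors R) Q).mp h1
      rw [one_mul] at h
      have hsa : (s : R) = (a : R) := IsFractionRing.injective R Q h
      exact hnr ⟨a, a.2, hsa ▸ s.2⟩
    obtain ⟨m, hmmax, hIm⟩ := Ideal.exists_le_maximal _ hmap
    haveI hmp : m.IsPrime := hmmax.isPrime
    haveI hpp : (Ideal.comap (algebraMap R Q) m).IsPrime := Ideal.IsPrime.comap _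
    have hIp : I ≤ Ideal.comap (algebraMap R Q) m :=
      fun a ha => Ideal.mem_comap.mpr (hIm (Ideal.mem_map_of_mem _ ha))
    obtain ⟨q, hq, hqp⟩ :=
      Ideal.exists_minimalPrimes_le (I := (⊥ : Ideal R))
        (J := Ideal.comap (algebraMap R Q) m) bot_le
    refine ⟨q, hq, ?_⟩
    have hq' : q.IsPrime := hq.1.1
    have hdisj : Disjoint ((nonZeroDivisors R : Submonoid R) : Set R) (q : Set R) := by
      rw [Set.disjoint_left]
      intro x hx hxq
      exact aux_minimal_prime_not_regular hq hxq hx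
    have hqQ : (Ideal.map (algebraMap R Q) q).IsPrime :=
      IsLocalization.isPrime_of_isPrime_disjoint (nonZeroDivisors R) Q q hq' hdisj
    have hle : Ideal.map (algebraMap R Q) q ≤ m := Ideal.map_le_iff_le_comap.mpr hqp
    have heq : Ideal.map (algebraMap R Q) q = m :=
      aux_prime_eq_of_le_of_kdim_zero hdim hqQ hmp hle
    have hqp' : q = Ideal.comap (algebraMap R Q) m := by
      rw [← heq,
        show Ideal.comap (algebraMap R Q) (Ideal.map (algebraMap R Q) q) = q from
          IsLocalization.comap_map_of_isPrime_disjoint (nonZeroDivisors R) Q hq' hdisj]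
    exact hqp' ▸ hIp
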